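/- Let ν ∈ (0,1), μ = 1 − ν, α > 0, and set α_N = α·N·ν^N. Then lim_{N→∞} α_N · ∫₀¹ [ (1 + (μ/ν)u)^N − 1 ] · u^{α_N − 1} du = α/μ. -/

import Mathlib

open Filter Topology MeasureTheory

section AuxLemmas
open Finset

lemma eval_integral (c a : ℝ) (hc : 0 < c) (ha : 0 < a) (N : ℕ) :
    ∫ u in Set.Ioo (0:ℝ) 1, ((1 + c * u) ^ N - 1) * u ^ (a - 1)
      = ∑ i ∈ range N, (N.choose (i+1) : ℝ) * c ^ (i+1) / ((i+1) + a) := by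
  have hEq : Set.EqOn (fun u : ℝ => ((1 + c * u) ^ N - 1) * u ^ (a - 1))
      (fun u : ℝ => ∑ i ∈ range N, (N.choose (i+1) : ℝ) * c ^ (i+1) * u ^ ((i+1 : ℕ) + a - 1))
      (Set.Ioo (0:ℝ) 1) := by
    intro u hu
    have hu0 : (0:ℝ) < u := hu.1
    have hbin : (1 + c * u) ^ N = ∑ k ∈ range (N+1), (c*u) ^ k * 1 ^ (N-k) * (N.choose k : ℝ) := by
      rw [add_comm]; exact add_pow (c*u) 1 N
    simp only [hbin, one_pow, mul_one]
    rw [Finset.sum_range_succ']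
    simp only [pow_zero, Nat.choose_zero_right, Nat.cast_one, mul_one]
    rw [add_sub_cancel_right, Finset.sum_mul]
    refine Finset.sum_congr rfl fun i _ => ?_
    have : u ^ ((i+1 : ℕ) + a - 1) = u ^ (i+1) * u ^ (a - 1) := by
      rw [show ((i+1 : ℕ) : ℝ) + a - 1 = ((i+1 : ℕ) : ℝ) + (a - 1) by ring,
        Real.rpow_add hu0, Real.rpow_natCast]
    rw [this, mul_pow]
    ring
  rw [MeasureTheory.setIntegral_congr_fun measurableSet_Ioo hEq]
  have hint : ∀ i : ℕ, IntegrableOn (fun u : ℝ => u ^ ((i+1 : ℕ) + a - 1)) (Set.Ioo (0:ℝ) 1) := by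
    intro i
    have h : (-1:ℝ) < (i+1 : ℕ) + a - 1 := by
      have : (0:ℝ) ≤ (i+1 : ℕ) := Nat.cast_nonneg _
      linarith
    have := intervalIntegral.intervalIntegrable_rpow' (a := 0) (b := 1) h
    rw [intervalIntegrable_iff, Set.uIoc_of_le (by norm_num : (0:ℝ) ≤ 1)] at this
    exact this.mono_set Set.Ioo_subset_Ioc_self
  rw [MeasureTheory.integral_finset_sum _ (fun i _ => (hint i).const_mul _)]
  refine Finset.sum_congr rfl fun i _ => ?_
  rw [MeasureTheory.integral_const_mul]
  have : ∫ u in Set.Ioo (0:ℝ) 1, u ^ ((i+1 : ℕ) + a - 1) = 1 / ((i+1 : ℕ) + a) := by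
    rw [← MeasureTheory.integral_Ioc_eq_integral_Ioo,
      ← intervalIntegral.integral_of_le (by norm_num : (0:ℝ) ≤ 1)]
    have h : (-1:ℝ) < (i+1 : ℕ) + a - 1 := by
      have : (0:ℝ) ≤ (i+1 : ℕ) := Nat.cast_nonneg _
      linarith
    rw [integral_rpow (Or.inl h)]
    have hne : ((i+1 : ℕ) : ℝ) + a ≠ 0 := by positivity
    rw [Real.one_rpow, Real.zero_rpow (by simpa using hne), sub_add_cancel]
    simp
  rw [this]
  push_cast
  ring

lemma sum_div_succ (p q : ℝ) (hp : 0 < p) (hpq : p + q = 1) (N : ℕ) :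
    ∑ k ∈ range (N+1), (N.choose k : ℝ) * p^k * q^(N-k) / (k+1)
      = (1 - q^(N+1)) / ((N+1) * p) := by
  rw [eq_div_iff (by positivity)]
  have hbin : (1:ℝ) = ∑ j ∈ range (N+2), p ^ j * q ^ (N+1-j) * ((N+1).choose j : ℝ) := by
    rw [← add_pow p q (N+1), hpq, one_pow]
  have hsplit : ∑ j ∈ range (N+2), p ^ j * q ^ (N+1-j) * ((N+1).choose j : ℝ)
      = (∑ k ∈ range (N+1), p ^ (k+1) * q ^ (N-k) * ((N+1).choose (k+1) : ℝ)) + q ^ (N+1) := by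
    rw [Finset.sum_range_succ']
    simp
  rw [Finset.sum_mul]
  have hterm : ∀ k ∈ range (N+1), (N.choose k : ℝ) * p^k * q^(N-k) / (k+1) * ((N+1) * p)
      = p ^ (k+1) * q ^ (N-k) * ((N+1).choose (k+1) : ℝ) := by
    intro k _
    have hc : ((N+1) : ℝ) * (N.choose k : ℝ) = ((N+1).choose (k+1) : ℝ) * ((k:ℝ)+1) := by
      have := Nat.add_one_mul_choose_eq N k
      have : ((N.succ * N.choose k : ℕ) : ℝ) = (((N+1).choose (k+1) * (k+1) : ℕ) : ℝ) := by
        exact_mod_cast congrArg (Nat.cast (R := ℝ)) this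
      push_cast at this
      linarith
    have hk1 : ((k:ℝ)+1) ≠ 0 := by positivity
    rw [div_mul_eq_mul_div, div_eq_iff hk1]
    push_cast at hc ⊢
    linear_combination (p ^ k * q ^ (N-k) * p) * hc
  rw [Finset.sum_congr rfl hterm]
  rw [hbin, hsplit]
  ring

lemma sum_div_sq_le (p q : ℝ) (hp : 0 < p) (hq : 0 ≤ q) (hpq : p + q = 1) (N : ℕ) :
    ∑ i ∈ range N, (N.choose (i+1) : ℝ) * p^(i+1) * q^(N-(i+1)) * (3/(((i:ℝ)+2)*((i:ℝ)+3)))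
      ≤ 3 / (((N:ℝ)+1) * ((N:ℝ)+2) * p^2) := by
  set u : ℕ → ℝ := fun j => p ^ j * q ^ (N+2-j) * ((N+2).choose j : ℝ) with hu
  have hunn : ∀ j, 0 ≤ u j := fun j => by positivity
  have hkey : ∀ i ∈ range N, (N.choose (i+1) : ℝ) * p^(i+1) * q^(N-(i+1)) * (3/(((i:ℝ)+2)*((i:ℝ)+3)))
      = (3 / (((N:ℝ)+1) * ((N:ℝ)+2) * p^2)) * u (i+3) := by
    intro i _
    have h1 := Nat.add_one_mul_choose_eq N (i+1)
    have h2 := Nat.add_one_mul_choose_eq (N+1) (i+2)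
    have h1R : ((N:ℝ)+1) * (N.choose (i+1) : ℝ) = (((N+1).choose (i+2) : ℕ) : ℝ) * ((i:ℝ)+2) := by
      exact_mod_cast h1
    have h2R : ((N:ℝ)+2) * (((N+1).choose (i+2) : ℕ) : ℝ)
        = (((N+2).choose (i+3) : ℕ) : ℝ) * ((i:ℝ)+3) := by
      exact_mod_cast h2
    have hR : ((N:ℝ)+1)*((N:ℝ)+2)*(N.choose (i+1) : ℝ)
        = ((i:ℝ)+2)*((i:ℝ)+3)*(((N+2).choose (i+3) : ℕ) : ℝ) := by
      linear_combination ((N:ℝ)+2) * h1R + ((i:ℝ)+2) * h2R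
    have hexp : N+2-(i+3) = N-(i+1) := by omega
    simp only [hu, hexp]
    have hp3 : p ^ (i+3) = p ^ (i+1) * p ^ 2 := by ring
    rw [hp3]
    have d1 : ((i:ℝ)+2)*((i:ℝ)+3) ≠ 0 := by positivity
    have d2 : ((N:ℝ)+1) * ((N:ℝ)+2) * p^2 ≠ 0 := by positivity
    rw [mul_div_assoc', div_mul_eq_mul_div, div_eq_div_iff d1 d2]
    linear_combination (3 * p ^ (i+1) * p ^ 2 * q ^ (N-(i+1))) * hR
  rw [Finset.sum_congr rfl hkey, ← Finset.mul_sum]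
  have hsub : ∑ i ∈ range N, u (i+3) ≤ ∑ j ∈ range (N+3), u j := by
    have himg : ∑ i ∈ range N, u (i+3) = ∑ j ∈ (range N).image (· + 3), u j :=
      (Finset.sum_image (by intro x _ y _ h; simp only at h; omega)).symm
    rw [himg]
    apply Finset.sum_le_sum_of_subset_of_nonneg
    · intro j hj
      simp only [Finset.mem_image, Finset.mem_range] at hj ⊢
      obtain ⟨i, hi, rfl⟩ := hj; omega
    · exact fun j _ _ => hunn j
  have hone : ∑ j ∈ range (N+3), u j = 1 := by
    have := add_pow p q (N+2)
    rw [hpq, one_pow] at this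
    rw [hu]
    exact (this.symm)
  calc (3 / (((N:ℝ)+1) * ((N:ℝ)+2) * p^2)) * ∑ i ∈ range N, u (i+3)
      ≤ (3 / (((N:ℝ)+1) * ((N:ℝ)+2) * p^2)) * ∑ j ∈ range (N+3), u j := by
        apply mul_le_mul_of_nonneg_left hsub (by positivity)
    _ = 3 / (((N:ℝ)+1) * ((N:ℝ)+2) * p^2) := by rw [hone, mul_one]

end AuxLemmas

section AuxLemmas2
open Finset
set_option maxHeartbeats 1000000 in
/-- Sub-critical regime: the key estimate `α_N Δ_N → α/μ` with `α_N = α N ν^N` and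
`Δ_N = ∫₀¹ ((1+(μ/ν)u)^N - 1) u^{α_N-1} du`. -/
theorem subcritical_DeltaN_asymptotics
    (ν μ α : ℝ) (hν : ν ∈ Set.Ioo (0:ℝ) 1) (hμ : μ = 1 - ν) (hα : 0 < α) :
    Tendsto (fun N : ℕ =>
        (α * N * ν ^ N) *
          ∫ u in Set.Ioo (0:ℝ) 1,
            ((1 + (μ / ν) * u) ^ N - 1) * u ^ (α * N * ν ^ N - 1))
      atTop (𝓝 (α / μ)) := by
  obtain ⟨hq0, hq1⟩ := hν
  have hp0 : 0 < μ := by rw [hμ]; linarith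
  have hpq : μ + ν = 1 := by rw [hμ]; ring
  have hc0 : 0 < μ / ν := div_pos hp0 hq0
  set L : ℕ → ℝ := fun N => α * N * ((1 - ν^(N+1)) / (((N:ℝ)+1) * μ) - ν^N) with hLdef
  set U : ℕ → ℝ := fun N => L N + α * N * (3 / (((N:ℝ)+1)*((N:ℝ)+2)*μ^2)) with hUdef
  have h1 : Tendsto (fun N : ℕ => (N:ℝ)/((N:ℝ)+1)) atTop (𝓝 1) :=
    tendsto_natCast_div_add_atTop (1:ℝ)
  have hNν : Tendsto (fun N : ℕ => (N:ℝ) * ν ^ N) atTop (𝓝 0) :=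
    tendsto_self_mul_const_pow_of_lt_one hq0.le hq1
  have h2 : Tendsto (fun N : ℕ => ν^(N+1)) atTop (𝓝 0) := by
    have := (tendsto_pow_atTop_nhds_zero_of_lt_one hq0.le hq1).mul_const ν
    simpa [pow_succ] using this
  have h3 : Tendsto (fun N : ℕ => ((N:ℝ)+2)⁻¹) atTop (𝓝 0) :=
    (tendsto_atTop_add_const_right atTop 2 tendsto_natCast_atTop_atTop).inv_tendsto_atTop
  have hL : Tendsto L atTop (𝓝 (α/μ)) := by
    have hT : Tendsto (fun N : ℕ => α/μ * ((N:ℝ)/((N:ℝ)+1) * (1 - ν^(N+1))) - α * ((N:ℝ)*ν^N))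
        atTop (𝓝 (α/μ * (1 * (1 - 0)) - α * 0)) :=
      ((h1.mul (tendsto_const_nhds.sub h2)).const_mul (α/μ)).sub (hNν.const_mul α)
    have heq : (α/μ * (1 * (1 - 0)) - α * 0) = α/μ := by ring
    rw [heq] at hT
    refine hT.congr fun N => ?_
    simp only [hLdef]
    have hμne : μ ≠ 0 := ne_of_gt hp0
    have hNne : ((N:ℝ)+1) ≠ 0 := by positivity
    field_simp
  have hE : Tendsto (fun N : ℕ => α * (N:ℝ) * (3 / (((N:ℝ)+1)*((N:ℝ)+2)*μ^2)))
      atTop (𝓝 0) := by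
    have hT : Tendsto (fun N : ℕ => (3*α/μ^2) * ((N:ℝ)/((N:ℝ)+1)) * ((N:ℝ)+2)⁻¹)
        atTop (𝓝 ((3*α/μ^2) * 1 * 0)) := ((h1.const_mul (3*α/μ^2)).mul h3)
    have heq : (3*α/μ^2) * 1 * 0 = (0:ℝ) := by ring
    rw [heq] at hT
    refine hT.congr fun N => ?_
    have hμne : μ ≠ 0 := ne_of_gt hp0
    have h1ne : ((N:ℝ)+1) ≠ 0 := by positivity
    have h2ne : ((N:ℝ)+2) ≠ 0 := by positivity
    field_simp
  have hU : Tendsto U atTop (𝓝 (α/μ)) := by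
    have := hL.add hE
    simpa using this
  have haN0 : Tendsto (fun N : ℕ => α * (N:ℝ) * ν ^ N) atTop (𝓝 0) := by
    have := hNν.const_mul α
    simpa [mul_assoc] using this
  have hle1 : ∀ᶠ N : ℕ in atTop, α * (N:ℝ) * ν ^ N ≤ 1 :=
    haN0.eventually (eventually_le_nhds zero_lt_one)
  have hmain : ∀ᶠ N : ℕ in atTop,
      L N ≤ (α * N * ν ^ N) * (∫ u in Set.Ioo (0:ℝ) 1,
          ((1 + (μ / ν) * u) ^ N - 1) * u ^ (α * N * ν ^ N - 1)) ∧
      (α * N * ν ^ N) * (∫ u in Set.Ioo (0:ℝ) 1,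
          ((1 + (μ / ν) * u) ^ N - 1) * u ^ (α * N * ν ^ N - 1)) ≤ U N := by
    filter_upwards [hle1, eventually_ge_atTop 1] with N hNle hN1
    have hNpos : (0:ℝ) < N := by exact_mod_cast Nat.pos_of_ne_zero (by omega)
    have ha : 0 < α * (N:ℝ) * ν ^ N := by positivity
    have hI := eval_integral (μ/ν) (α * N * ν ^ N) hc0 ha N
    -- weighted form
    have hS : (α * (N:ℝ) * ν ^ N) * (∫ u in Set.Ioo (0:ℝ) 1,
          ((1 + (μ / ν) * u) ^ N - 1) * u ^ (α * N * ν ^ N - 1))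
        = α * N * ∑ i ∈ range N,
            (N.choose (i+1) : ℝ) * μ^(i+1) * ν^(N-(i+1)) / (((i:ℝ)+1) + α * N * ν ^ N) := by
      rw [hI, Finset.mul_sum, Finset.mul_sum]
      refine Finset.sum_congr rfl fun i hi => ?_
      have hin : i + 1 ≤ N := Finset.mem_range.mp hi
      have hg : ν ^ N = ν ^ (N-(i+1)) * ν ^ (i+1) := (pow_sub_mul_pow ν hin).symm
      have hνne : ν ^ (i+1) ≠ 0 := by positivity
      have hdne : ((i:ℝ)+1) + α * N * ν ^ N ≠ 0 := by positivity
      rw [hg] at hdne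
      rw [div_pow, hg]
      field_simp
    rw [hS]
    -- the three sums
    set a : ℝ := α * (N:ℝ) * ν ^ N with hadef
    have hAeq : (1 - ν^(N+1)) / (((N:ℝ)+1) * μ) - ν^N
        = ∑ i ∈ range N, (N.choose (i+1) : ℝ) * μ^(i+1) * ν^(N-(i+1)) / (((i:ℝ)+1) + 1) := by
      have hB := sum_div_succ μ ν hp0 hpq N
      rw [Finset.sum_range_succ'] at hB
      simp only [Nat.choose_zero_right, Nat.cast_one, one_mul, pow_zero, Nat.sub_zero,
        Nat.cast_zero, zero_add, div_one] at hB
      rw [← hB]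
      push_cast
      ring
    constructor
    · -- lower bound
      simp only [hLdef]
      rw [hAeq, Finset.mul_sum, Finset.mul_sum]
      refine Finset.sum_le_sum fun i _ => ?_
      have hX : (0:ℝ) ≤ (N.choose (i+1) : ℝ) * μ^(i+1) * ν^(N-(i+1)) := by positivity
      have hden : (0:ℝ) < ((i:ℝ)+1) + a := by positivity
      have hmono : (N.choose (i+1) : ℝ) * μ^(i+1) * ν^(N-(i+1)) / (((i:ℝ)+1) + 1)
          ≤ (N.choose (i+1) : ℝ) * μ^(i+1) * ν^(N-(i+1)) / (((i:ℝ)+1) + a) := by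
        apply div_le_div_of_nonneg_left hX hden
        linarith
      have hαN : (0:ℝ) ≤ α * N := by positivity
      exact mul_le_mul_of_nonneg_left hmono hαN
    · -- upper bound
      simp only [hUdef, hLdef]
      rw [hAeq]
      have hterm : ∀ i ∈ range N,
          (N.choose (i+1) : ℝ) * μ^(i+1) * ν^(N-(i+1)) / (((i:ℝ)+1) + a)
          ≤ (N.choose (i+1) : ℝ) * μ^(i+1) * ν^(N-(i+1)) / (((i:ℝ)+1) + 1)
            + (N.choose (i+1) : ℝ) * μ^(i+1) * ν^(N-(i+1)) * (3/(((i:ℝ)+2)*((i:ℝ)+3))) := by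
        intro i _
        have hX : (0:ℝ) ≤ (N.choose (i+1) : ℝ) * μ^(i+1) * ν^(N-(i+1)) := by positivity
        have hx0 : (0:ℝ) ≤ (i:ℝ) := Nat.cast_nonneg i
        have hfrac : 1/(((i:ℝ)+1) + a) ≤ 1/(((i:ℝ)+1) + 1) + 3/(((i:ℝ)+2)*((i:ℝ)+3)) := by
          have step1 : 1/(((i:ℝ)+1) + a) ≤ 1/((i:ℝ)+1) := by
            apply one_div_le_one_div_of_le (by linarith)
            linarith
          have step2 : 1/((i:ℝ)+1) ≤ 1/(((i:ℝ)+1) + 1) + 3/(((i:ℝ)+2)*((i:ℝ)+3)) := by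
            rw [div_add_div _ _ (by positivity) (by positivity),
              div_le_div_iff₀ (by positivity) (by positivity)]
            nlinarith [mul_nonneg (by linarith : (0:ℝ) ≤ (i:ℝ)+2) (by linarith : (0:ℝ) ≤ 2*(i:ℝ))]
          linarith
        calc (N.choose (i+1) : ℝ) * μ^(i+1) * ν^(N-(i+1)) / (((i:ℝ)+1) + a)
            = (N.choose (i+1) : ℝ) * μ^(i+1) * ν^(N-(i+1)) * (1/(((i:ℝ)+1) + a)) := by ring
          _ ≤ (N.choose (i+1) : ℝ) * μ^(i+1) * ν^(N-(i+1))
              * (1/(((i:ℝ)+1) + 1) + 3/(((i:ℝ)+2)*((i:ℝ)+3))) :=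
            mul_le_mul_of_nonneg_left hfrac hX
          _ = _ := by ring
      have hsum := Finset.sum_le_sum hterm
      rw [Finset.sum_add_distrib] at hsum
      have hC := sum_div_sq_le μ ν hp0 hq0.le hpq N
      have hαN : (0:ℝ) ≤ α * N := by positivity
      calc α * (N:ℝ) * ∑ i ∈ range N,
            (N.choose (i+1) : ℝ) * μ^(i+1) * ν^(N-(i+1)) / (((i:ℝ)+1) + a)
          ≤ α * (N:ℝ) * ((∑ i ∈ range N,
              (N.choose (i+1) : ℝ) * μ^(i+1) * ν^(N-(i+1)) / (((i:ℝ)+1) + 1))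
            + 3 / (((N:ℝ)+1) * ((N:ℝ)+2) * μ^2)) := by
            apply mul_le_mul_of_nonneg_left _ hαN
            refine le_trans hsum ?_
            exact add_le_add_right hC _
        _ = α * (N:ℝ) * (∑ i ∈ range N,
              (N.choose (i+1) : ℝ) * μ^(i+1) * ν^(N-(i+1)) / (((i:ℝ)+1) + 1))
            + α * (N:ℝ) * (3 / (((N:ℝ)+1) * ((N:ℝ)+2) * μ^2)) := by ring
  exact tendsto_of_tendsto_of_tendsto_of_le_of_le' hL hU
    (hmain.mono fun N h => h.1) (hmain.mono fun N h => h.2)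

end AuxLemmas2
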